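/- For every enumeration e : Fin n ≃ V of the vertices of a finite simple graph G, the set vis(e) = { e(i) | there exists j with (i : ℕ) + 1 < (j : ℕ) and e(i) adjacent to e(j) } is a visible set of G; that is, the subgraph of G induced on V \ vis(e) is a union of paths. -/

import Mathlib

/-- A simple graph is a *union of paths* if it is acyclic and every vertex
has degree at most 2. -/
def IsUnionOfPaths {V : Type*} (G : SimpleGraph V) : Prop :=
  G.IsAcyclic ∧ ∀ v : V, (G.neighborSet v).ncard ≤ 2

/-- A graph whose adjacency relation only relates vertices with consecutive
values of an injective `ℕ`-labelling is acyclic. -/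
lemma acyclic_of_nat_consec {α : Type*} {G : SimpleGraph α} {f : α → ℕ}
    (hf : Function.Injective f)
    (hadj : ∀ a b, G.Adj a b → f a + 1 = f b ∨ f b + 1 = f a) : G.IsAcyclic := by
  classical
  intro v c hc
  obtain ⟨u, hu⟩ : ∃ u, u ∈ c.support.argmax f := by
    cases h : c.support.argmax f with
    | none => exact absurd (List.argmax_eq_none.mp h) c.support_ne_nil
    | some u => exact ⟨u, rfl⟩
  have humem : u ∈ c.support := List.argmax_mem hu
  have hc' : (c.rotate u humem).IsCycle := hc.rotate humem
  have hmax : ∀ x, x ∈ (c.rotate u humem).support → f x ≤ f u := by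
    intro x hx
    rw [(c.rotate u humem).support_eq_cons] at hx
    rcases List.mem_cons.mp hx with rfl | hx
    · exact le_refl _
    · exact List.le_of_mem_argmax
        (List.mem_of_mem_tail ((SimpleGraph.Walk.support_rotate c u humem).mem_iff.mp hx)) hu
  obtain ⟨w, h1, p, hp⟩ := SimpleGraph.Walk.not_nil_iff.mp hc'.not_nil
  rw [hp] at hc' hmax
  -- the second vertex has value `f u - 1`
  have hwmem : w ∈ (SimpleGraph.Walk.cons h1 p).support := by
    rw [SimpleGraph.Walk.support_cons]
    exact List.mem_cons_of_mem _ p.start_mem_support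
  have hw1 : f w + 1 = f u := by
    rcases hadj u w h1 with h | h
    · have := hmax w hwmem
      have hne : f u ≠ f w := fun hh => h1.ne (hf hh)
      omega
    · exact h
  -- the penultimate vertex
  obtain ⟨x, h2, q, hq⟩ := SimpleGraph.Walk.exists_eq_cons_of_ne h1.ne p.reverse
  have hxmem : x ∈ (SimpleGraph.Walk.cons h1 p).support := by
    have : x ∈ p.reverse.support := by
      rw [hq, SimpleGraph.Walk.support_cons]
      exact List.mem_cons_of_mem _ q.start_mem_support
    rw [SimpleGraph.Walk.support_reverse, List.mem_reverse] at this
    rw [SimpleGraph.Walk.support_cons]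
    exact List.mem_cons_of_mem _ this
  have hx1 : f x + 1 = f u := by
    rcases hadj u x h2 with h | h
    · have := hmax x hxmem
      have hne : f u ≠ f x := fun hh => h2.ne (hf hh)
      omega
    · exact h
  have hwx : w = x := hf (by omega)
  subst hwx
  -- the first and last edges coincide, contradicting Nodup of the edges
  have hedge : s(u, w) ∈ p.edges := by
    have : p.reverse.edges = s(u, w) :: q.edges := by rw [hq]; simp
    rw [SimpleGraph.Walk.edges_reverse] at this
    have : s(u, w) ∈ p.edges.reverse := by rw [this]; exact List.mem_cons_self
    rwa [List.mem_reverse] at this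
  have hnodup : ((SimpleGraph.Walk.cons h1 p).edges).Nodup := hc'.isCircuit.isTrail.edges_nodup
  rw [SimpleGraph.Walk.edges_cons, List.nodup_cons] at hnodup
  exact hnodup.1 hedge

/-- For every enumeration `e` of the vertices, the set `vis(e)` of vertices
`e i` that are adjacent to some `e j` with `i + 1 < j` is a visible set:
the induced subgraph on its complement is a union of paths. -/
theorem vis_isVisibleSet {V : Type*} [Fintype V] (G : SimpleGraph V)
    (n : ℕ) (hn : Fintype.card V = n) (e : Fin n ≃ V) :
    IsUnionOfPaths (G.induce
      ({v : V | ∃ i j : Fin n, v = e i ∧ (i : ℕ) + 1 < (j : ℕ) ∧ G.Adj (e i) (e j)}ᶜ)) := by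
  set S : Set V := {v : V | ∃ i j : Fin n, v = e i ∧ (i : ℕ) + 1 < (j : ℕ) ∧ G.Adj (e i) (e j)}ᶜ
    with hS
  set H := G.induce S with hH
  set f : S → ℕ := fun a => (e.symm a.val : ℕ) with hf
  have hfinj : Function.Injective f := by
    intro a b hab
    exact Subtype.ext (e.symm.injective (Fin.val_injective hab))
  have key : ∀ a b : S, H.Adj a b → f a + 1 = f b ∨ f b + 1 = f a := by
    rintro ⟨a, ha⟩ ⟨b, hb⟩ hab
    have hGadj : G.Adj a b := hab
    have ha' : ¬∃ i j : Fin n, a = e i ∧ (i : ℕ) + 1 < (j : ℕ) ∧ G.Adj (e i) (e j) := ha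
    have hb' : ¬∃ i j : Fin n, b = e i ∧ (i : ℕ) + 1 < (j : ℕ) ∧ G.Adj (e i) (e j) := hb
    push_neg at ha' hb'
    have h1 := ha' (e.symm a) (e.symm b) (by simp)
    have h2 := hb' (e.symm b) (e.symm a) (by simp)
    simp only [Equiv.apply_symm_apply] at h1 h2
    have hna : ¬((e.symm a : ℕ) + 1 < (e.symm b : ℕ)) := fun h => h1 h hGadj
    have hnb : ¬((e.symm b : ℕ) + 1 < (e.symm a : ℕ)) := fun h => h2 h hGadj.symm
    have hne : (e.symm a : ℕ) ≠ (e.symm b : ℕ) := by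
      intro h
      exact hGadj.ne (by simpa using congrArg e (Fin.val_injective h))
    simp only [f]
    omega
  constructor
  · exact acyclic_of_nat_consec hfinj key
  · intro v
    have hsub : f '' H.neighborSet v ⊆ {f v + 1, f v - 1} := by
      rintro m ⟨a, ha, rfl⟩
      simp only [Set.mem_insert_iff, Set.mem_singleton_iff]
      rcases key v a ha with h | h
      · left; omega
      · right; omega
    calc (H.neighborSet v).ncard = (f '' H.neighborSet v).ncard :=
          (Set.ncard_image_of_injective _ hfinj).symm
      _ ≤ ({f v + 1, f v - 1} : Set ℕ).ncard := Set.ncard_le_ncard hsub (Set.toFinite _)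
      _ ≤ 2 := by
          refine le_trans (Set.ncard_insert_le _ _) ?_
          simp [Set.ncard_singleton]
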